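/- arXiv:2002.07663 — 5 statements merged into one kernel-verified Lean document; each statement's English description precedes it below -/
import Mathlib

section
/- Let C₁, C₂, M be positive real numbers and let a : ℝ³ → ℝ be continuously differentiable with C₁ ≤ a(x) ≤ C₂ and ω(x)·‖∇a(x)‖ ≤ M for all x ∈ ℝ³. Then for every continuously differentiable function g : ℝ³ → ℝ one has ‖ω⁻¹·(g/a)‖_{L²} + ‖∇(g/a)‖_{L²} ≤ (1/C₁ + M/C₁²)·(‖ω⁻¹·g‖_{L²} + ‖∇g‖_{L²}). In particular, 1/a is a multiplier of the weighted Sobolev space ℋ¹(ℝ³). -/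
open MeasureTheory Real
open scoped ENNReal RealInnerProductSpace

noncomputable section

/-- `ℝ³` as a Euclidean space. -/
abbrev E3 : Type := EuclideanSpace ℝ (Fin 3)

/-- The weight function `ω(x) = (1 + |x|²)^{1/2}`. -/
def ω (x : E3) : ℝ := Real.sqrt (1 + ‖x‖ ^ 2)

lemma one_le_ω (x : E3) : 1 ≤ ω x := by
  rw [ω]
  have h1 : (1:ℝ) ≤ 1 + ‖x‖^2 := by nlinarith [sq_nonneg ‖x‖]
  nlinarith [Real.sq_sqrt (by linarith : (0:ℝ) ≤ 1 + ‖x‖^2), Real.sqrt_nonneg (1 + ‖x‖^2)]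

lemma ω_pos (x : E3) : 0 < ω x := lt_of_lt_of_le one_pos (one_le_ω x)

lemma grad_norm_eq (f : E3 → ℝ) (x : E3) : ‖gradient f x‖ = ‖fderiv ℝ f x‖ := by
  rw [gradient]
  exact (InnerProductSpace.toDual ℝ E3).symm.norm_map _

lemma grad_div (a g : E3 → ℝ) (x : E3) (hax : a x ≠ 0)
    (ha : DifferentiableAt ℝ a x) (hg : DifferentiableAt ℝ g x) :
    gradient (fun y => g y / a y) x
      = (a x)⁻¹ • gradient g x + (-(g x) * (a x ^ 2)⁻¹) • gradient a x := by
  have hinv : HasFDerivAt (fun y => (a y)⁻¹) ((-(a x ^ 2)⁻¹) • fderiv ℝ a x) x :=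
    (hasDerivAt_inv hax).comp_hasFDerivAt x ha.hasFDerivAt
  have hmul := hg.hasFDerivAt.mul hinv
  have heq : (fun y => g y / a y) = fun y => g y * (a y)⁻¹ := by
    funext y; rw [div_eq_mul_inv]
  rw [heq]
  have hf := hmul.fderiv
  rw [gradient, show (fun y => g y * (a y)⁻¹) = (g * fun y => (a y)⁻¹) from rfl, hf]
  rw [map_add, LinearIsometryEquiv.map_smul, LinearIsometryEquiv.map_smul, smul_smul, add_comm,
    gradient, gradient]
  congr 2
  · exact (InnerProductSpace.toDual ℝ E3).symm.map_smul _ _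
  · ring

/-- under the bounds `C₁ ≤ a ≤ C₂` and `ω·‖∇a‖ ≤ M`, the function `1/a` is a
multiplier of the weighted Sobolev space `ℋ¹(ℝ³)`. -/
theorem statement1 (C₁ C₂ M : ℝ) (hC₁ : 0 < C₁) (hC₂ : 0 < C₂) (hM : 0 < M)
    (a : E3 → ℝ) (ha : ContDiff ℝ 1 a)
    (hbound : ∀ x, C₁ ≤ a x ∧ a x ≤ C₂)
    (hgrad : ∀ x, ω x * ‖gradient a x‖ ≤ M)
    (g : E3 → ℝ) (hg : ContDiff ℝ 1 g) :
    eLpNorm (fun x => (ω x)⁻¹ * (g x / a x)) 2 volume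
      + eLpNorm (fun x => gradient (fun y => g y / a y) x) 2 volume
    ≤ ENNReal.ofReal (1 / C₁ + M / C₁ ^ 2) *
      (eLpNorm (fun x => (ω x)⁻¹ * g x) 2 volume
        + eLpNorm (fun x => gradient g x) 2 volume) := by
  have hapos : ∀ x, 0 < a x := fun x => lt_of_lt_of_le hC₁ (hbound x).1
  have hax : ∀ x, a x ≠ 0 := fun x => ne_of_gt (hapos x)
  set A := eLpNorm (fun x => (ω x)⁻¹ * g x) 2 volume with hA
  set B := eLpNorm (fun x => gradient g x) 2 volume with hB
  set f1 : E3 → E3 := fun x => (a x)⁻¹ • gradient g x with hf1def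
  set f2 : E3 → E3 := fun x => (-(g x) * (a x ^ 2)⁻¹) • gradient a x with hf2def
  have hgg : Continuous (gradient g) :=
    ((InnerProductSpace.toDual ℝ E3).symm.continuous).comp (hg.continuous_fderiv one_ne_zero)
  have hga : Continuous (gradient a) :=
    ((InnerProductSpace.toDual ℝ E3).symm.continuous).comp (ha.continuous_fderiv one_ne_zero)
  have hf1c : Continuous f1 :=
    ((ha.continuous).inv₀ hax).smul hgg
  have hf2c : Continuous f2 :=
    (((hg.continuous).neg).mul (((ha.continuous).pow 2).inv₀
      (fun x => pow_ne_zero 2 (hax x)))).smul hga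
  have hgradeq : (fun x => gradient (fun y => g y / a y) x) = fun x => f1 x + f2 x := by
    funext x
    exact grad_div a g x (hax x) (ha.differentiable one_ne_zero x) (hg.differentiable one_ne_zero x)
  -- pointwise bound 1
  have bound1 : eLpNorm (fun x => (ω x)⁻¹ * (g x / a x)) 2 volume
      ≤ ENNReal.ofReal (1 / C₁) * A := by
    refine eLpNorm_le_mul_eLpNorm_of_ae_le_mul (Filter.Eventually.of_forall fun x => ?_) 2
    have hω := ω_pos x
    have h1 : ‖(ω x)⁻¹ * (g x / a x)‖ = (ω x)⁻¹ * |g x| / a x := by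
      rw [Real.norm_eq_abs, abs_mul, abs_div, abs_of_nonneg (inv_nonneg.2 hω.le),
        abs_of_pos (hapos x), mul_div_assoc]
    have h2 : ‖(ω x)⁻¹ * g x‖ = (ω x)⁻¹ * |g x| := by
      rw [Real.norm_eq_abs, abs_mul, abs_of_nonneg (inv_nonneg.2 hω.le)]
    rw [h1, h2, div_le_iff₀ (hapos x)]
    have key : 1 / C₁ * ((ω x)⁻¹ * |g x|) * C₁ ≤ 1 / C₁ * ((ω x)⁻¹ * |g x|) * a x :=
      mul_le_mul_of_nonneg_left (hbound x).1 (by positivity)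
    have heq : 1 / C₁ * ((ω x)⁻¹ * |g x|) * C₁ = (ω x)⁻¹ * |g x| := by
      field_simp
    linarith
  have bound2 : eLpNorm f1 2 volume ≤ ENNReal.ofReal (1 / C₁) * B := by
    refine eLpNorm_le_mul_eLpNorm_of_ae_le_mul (Filter.Eventually.of_forall fun x => ?_) 2
    rw [norm_smul, Real.norm_eq_abs, abs_of_nonneg (inv_nonneg.2 (hapos x).le), one_div]
    exact mul_le_mul_of_nonneg_right
      (inv_anti₀ hC₁ (hbound x).1) (norm_nonneg _)
  have bound3 : eLpNorm f2 2 volume ≤ ENNReal.ofReal (M / C₁ ^ 2) * A := by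
    refine eLpNorm_le_mul_eLpNorm_of_ae_le_mul (Filter.Eventually.of_forall fun x => ?_) 2
    have hω := ω_pos x
    have hgr : ‖gradient a x‖ ≤ M * (ω x)⁻¹ := by
      have h := hgrad x
      rw [mul_comm] at h
      calc ‖gradient a x‖ = ‖gradient a x‖ * ω x * (ω x)⁻¹ := by field_simp
        _ ≤ M * (ω x)⁻¹ := by gcongr
    have h1 : ‖f2 x‖ = |g x| * (a x ^ 2)⁻¹ * ‖gradient a x‖ := by
      rw [hf2def, norm_smul, Real.norm_eq_abs, abs_mul, abs_neg,
        abs_of_nonneg (inv_nonneg.2 (by positivity : (0:ℝ) ≤ a x ^ 2))]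
    have h2 : ‖(ω x)⁻¹ * g x‖ = (ω x)⁻¹ * |g x| := by
      rw [Real.norm_eq_abs, abs_mul, abs_of_nonneg (inv_nonneg.2 hω.le)]
    rw [h1, h2]
    have hC₁sq : C₁ ^ 2 ≤ a x ^ 2 := by
      have := (hbound x).1; nlinarith [hapos x]
    calc |g x| * (a x ^ 2)⁻¹ * ‖gradient a x‖
        ≤ |g x| * (C₁ ^ 2)⁻¹ * (M * (ω x)⁻¹) := by
          gcongr
      _ = M / C₁ ^ 2 * ((ω x)⁻¹ * |g x|) := by ring
  have tri : eLpNorm (fun x => gradient (fun y => g y / a y) x) 2 volume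
      ≤ eLpNorm f1 2 volume + eLpNorm f2 2 volume := by
    rw [hgradeq]
    exact eLpNorm_add_le hf1c.aestronglyMeasurable hf2c.aestronglyMeasurable one_le_two
  have hsum : eLpNorm (fun x => (ω x)⁻¹ * (g x / a x)) 2 volume
      + eLpNorm (fun x => gradient (fun y => g y / a y) x) 2 volume
      ≤ ENNReal.ofReal (1 / C₁) * A + (ENNReal.ofReal (1 / C₁) * B
        + ENNReal.ofReal (M / C₁ ^ 2) * A) :=
    add_le_add bound1 (tri.trans (add_le_add bound2 bound3))
  refine hsum.trans ?_
  rw [ENNReal.ofReal_add (by positivity) (by positivity), add_mul, mul_add, mul_add]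
  calc ENNReal.ofReal (1 / C₁) * A + (ENNReal.ofReal (1 / C₁) * B
        + ENNReal.ofReal (M / C₁ ^ 2) * A)
      ≤ ENNReal.ofReal (1 / C₁) * A + (ENNReal.ofReal (1 / C₁) * B
        + (ENNReal.ofReal (M / C₁ ^ 2) * A + ENNReal.ofReal (M / C₁ ^ 2) * B)) := by
        gcongr; exact le_self_add
    _ = ENNReal.ofReal (1 / C₁) * A + ENNReal.ofReal (1 / C₁) * B
        + (ENNReal.ofReal (M / C₁ ^ 2) * A + ENNReal.ofReal (M / C₁ ^ 2) * B) := by ring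
end
end

section
/- Let a : ℝ³ → ℝ be twice continuously differentiable with a(x) > 0 for all x, and fix y ∈ ℝ³. Then for every x ≠ y, Σᵢ₌₁³ ∂/∂xᵢ ( a(x) · ∂/∂xᵢ ( P_Δ(x−y)/a(x) ) ) = −Σᵢ₌₁³ [ ∂ᵢ(ln a)(x) · ∂P_Δ/∂xᵢ(x−y) + ∂ᵢ∂ᵢ(ln a)(x) · P_Δ(x−y) ]. That is, the parametrix P(x,y) = P_Δ(x−y)/a(x) for the divergence-form operator 𝒜u = Σᵢ∂ᵢ(a ∂ᵢ u) satisfies 𝒜ₓ P(x,y) = R(x,y) away from the diagonal, where R(x,y) = −Σᵢ ∂/∂xᵢ( ∂ᵢ(ln a)(x) · P_Δ(x−y) ) is the remainder. -/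
open MeasureTheory Real
open scoped ENNReal RealInnerProductSpace

noncomputable section

/-- The partial derivative in the `i`-th coordinate direction. -/
def pderiv3 (i : Fin 3) (f : E3 → ℝ) (x : E3) : ℝ := fderiv ℝ f x (EuclideanSpace.single i 1)

/-- The Laplacian `Δf = Σᵢ ∂²f/∂xᵢ²`. -/
def laplacian3 (f : E3 → ℝ) (x : E3) : ℝ := ∑ i : Fin 3, pderiv3 i (pderiv3 i f) x

/-- The fundamental solution of the Laplace operator in `ℝ³`: `P_Δ(z) = -1/(4π|z|)`. -/
def PΔ (z : E3) : ℝ := -(1 / (4 * Real.pi * ‖z‖))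

section aux
variable (y : E3)

/-- squared distance -/
def q (w : E3) : ℝ := ∑ i : Fin 3, ((w - y) i) ^ 2

lemma q_eq (w : E3) : q y w = ‖w - y‖ ^ 2 := by
  rw [EuclideanSpace.norm_eq, Real.sq_sqrt (by positivity)]
  simp [q, Real.norm_eq_abs, sq_abs]

lemma q_pos {w : E3} (hw : w ≠ y) : 0 < q y w := by
  rw [q_eq]
  have : w - y ≠ 0 := sub_ne_zero.mpr hw
  exact pow_pos (norm_pos_iff.mpr this) 2

/-- derivative of q -/
def Dq (w : E3) : E3 →L[ℝ] ℝ := ∑ i : Fin 3, (2 * (w - y) i) • (EuclideanSpace.proj i : E3 →L[ℝ] ℝ)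

lemma hasFDerivAt_q (w : E3) : HasFDerivAt (q y) (Dq y w) w := by
  apply HasFDerivAt.fun_sum
  intro i _
  have h1 : HasFDerivAt (fun w : E3 => (w - y) i) (EuclideanSpace.proj i : E3 →L[ℝ] ℝ) w := by
    have := ((EuclideanSpace.proj i : E3 →L[ℝ] ℝ).hasFDerivAt (x := w - y)).comp w
      ((hasFDerivAt_id w).sub_const y)
    exact this.congr_fderiv (ContinuousLinearMap.comp_id _)
  have := h1.mul h1
  refine (this.congr_fderiv ?_).congr_of_eventuallyEq (Filter.Eventually.of_forall fun w => ?_)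
  · ext v; simp [two_mul, add_smul]
  · rw [Pi.mul_apply]; ring

lemma Dq_apply (w : E3) (i : Fin 3) : Dq y w (EuclideanSpace.single i 1) = 2 * (w - y) i := by
  simp [Dq, ContinuousLinearMap.sum_apply, EuclideanSpace.single_apply]

end aux

section aux2
variable (y : E3)

def cP : ℝ := -(1 / (4 * Real.pi))

lemma PΔ_eq {w : E3} (hw : w ≠ y) : PΔ (w - y) = cP * q y w ^ (-(1/2) : ℝ) := by
  have hz : w - y ≠ 0 := sub_ne_zero.mpr hw
  have hn : (0:ℝ) < ‖w - y‖ := norm_pos_iff.mpr hz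
  have h2 : (q y w) ^ (-(1/2):ℝ) = ‖w - y‖⁻¹ := by
    rw [q_eq, ← Real.rpow_natCast ‖w - y‖ 2, ← Real.rpow_mul (norm_nonneg _)]
    norm_num [Real.rpow_neg_one]
  rw [h2, PΔ, cP]
  field_simp

lemma eventually_PΔ_eq {x : E3} (hx : x ≠ y) :
    (fun z => PΔ (z - y)) =ᶠ[nhds x] (fun z => cP * q y z ^ (-(1/2) : ℝ)) := by
  filter_upwards [IsOpen.mem_nhds isOpen_ne hx] with z hz
  exact PΔ_eq y hz

lemma hasFDerivAt_u {w : E3} (hw : w ≠ y) :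
    HasFDerivAt (fun z => PΔ (z - y))
      ((cP * (-(1/2)) * q y w ^ (-(3/2) : ℝ)) • Dq y w) w := by
  have h := ((hasFDerivAt_q y w).rpow_const (p := (-(1/2):ℝ))
      (Or.inl (q_pos y hw).ne')).const_mul cP
  have h2 := h.congr_of_eventuallyEq (eventually_PΔ_eq y hw)
  refine h2.congr_fderiv ?_
  symm
  rw [smul_smul]
  norm_num
  ring_nf
  rw [← neg_smul]
  congr 1
  ring

lemma pderiv_u_eq (i : Fin 3) {w : E3} (hw : w ≠ y) :
    pderiv3 i (fun z => PΔ (z - y)) w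
      = (-cP) * ((w - y) i * q y w ^ (-(3/2) : ℝ)) := by
  rw [pderiv3, (hasFDerivAt_u y hw).fderiv, ContinuousLinearMap.smul_apply, Dq_apply]
  simp only [smul_eq_mul]
  ring

end aux2

section aux3
variable (y : E3)

def gfun (i : Fin 3) (w : E3) : ℝ := (-cP) * ((w - y) i * q y w ^ (-(3/2) : ℝ))

lemma hasFDerivAt_coord (i : Fin 3) (w : E3) :
    HasFDerivAt (fun w : E3 => (w - y) i) (EuclideanSpace.proj i : E3 →L[ℝ] ℝ) w := by
  have := ((EuclideanSpace.proj i : E3 →L[ℝ] ℝ).hasFDerivAt (x := w - y)).comp w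
    ((hasFDerivAt_id w).sub_const y)
  exact this.congr_fderiv (ContinuousLinearMap.comp_id _)

lemma hasFDerivAt_g (i : Fin 3) {w : E3} (hw : w ≠ y) :
    HasFDerivAt (gfun y i)
      ((-cP) • ((w - y) i • ((-(3/2) : ℝ) * q y w ^ (-(5/2) : ℝ)) • Dq y w
        + (q y w ^ (-(3/2) : ℝ)) • (EuclideanSpace.proj i : E3 →L[ℝ] ℝ))) w := by
  have hrpow := (hasFDerivAt_q y w).rpow_const (p := (-(3/2):ℝ)) (Or.inl (q_pos y hw).ne')
  have h := ((hasFDerivAt_coord y i w).mul hrpow).const_mul (-cP)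
  refine h.congr_fderiv ?_
  norm_num

lemma pderiv_g (i : Fin 3) {x : E3} (hx : x ≠ y) :
    pderiv3 i (gfun y i) x
      = (-cP) * ((x - y) i * ((-(3/2) : ℝ) * q y x ^ (-(5/2) : ℝ)) * (2 * (x - y) i)
          + q y x ^ (-(3/2) : ℝ)) := by
  rw [pderiv3, (hasFDerivAt_g y i hx).fderiv]
  simp only [ContinuousLinearMap.smul_apply, ContinuousLinearMap.add_apply, smul_eq_mul,
    Dq_apply, EuclideanSpace.single_apply]
  rw [show (EuclideanSpace.proj i : E3 →L[ℝ] ℝ) (EuclideanSpace.single i 1) = 1 by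
    simp [EuclideanSpace.single_apply]]
  ring

lemma eventually_pderiv_u (i : Fin 3) {x : E3} (hx : x ≠ y) :
    (pderiv3 i (fun z => PΔ (z - y))) =ᶠ[nhds x] gfun y i := by
  filter_upwards [IsOpen.mem_nhds isOpen_ne hx] with z hz
  exact pderiv_u_eq y i hz

lemma laplacian_u {x : E3} (hx : x ≠ y) :
    ∑ i : Fin 3, pderiv3 i (pderiv3 i (fun z => PΔ (z - y))) x = 0 := by
  have hsum : ∑ i : Fin 3, ((x - y) i)^2 = q y x := rfl
  have hq5 : q y x * q y x ^ (-(5/2) : ℝ) = q y x ^ (-(3/2) : ℝ) := by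
    nth_rewrite 1 [← Real.rpow_one (q y x)]
    rw [← Real.rpow_add (q_pos y hx)]
    norm_num
  have hstep : ∀ i : Fin 3, pderiv3 i (pderiv3 i (fun z => PΔ (z - y))) x
      = (-cP) * ((x - y) i * ((-(3/2) : ℝ) * q y x ^ (-(5/2) : ℝ)) * (2 * (x - y) i)
          + q y x ^ (-(3/2) : ℝ)) := by
    intro i
    rw [pderiv3, Filter.EventuallyEq.fderiv_eq (eventually_pderiv_u y i hx), ← pderiv3,
      pderiv_g y i hx]
  rw [Finset.sum_congr rfl (fun i _ => hstep i)]
  have : ∑ i : Fin 3, ((-cP) * ((x - y) i * ((-(3/2) : ℝ) * q y x ^ (-(5/2) : ℝ)) * (2 * (x - y) i)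
          + q y x ^ (-(3/2) : ℝ)))
      = (-cP) * ((-3 : ℝ) * (q y x * q y x ^ (-(5/2) : ℝ)) + 3 * q y x ^ (-(3/2) : ℝ)) := by
    rw [← hsum]
    simp only [Finset.mul_sum, Finset.sum_div, Fin.sum_univ_three]
    ring
  rw [this, hq5]
  ring

end aux3

section aux4
variable (y : E3) (a : E3 → ℝ) (ha : ContDiff ℝ 2 a) (hpos : ∀ x, 0 < a x)
set_option linter.unusedSectionVars false
include ha hpos

lemma hdiff_a : Differentiable ℝ a := ha.differentiable (by norm_num)

lemma pderiv_L (i : Fin 3) (w : E3) :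
    pderiv3 i (fun w => Real.log (a w)) w
      = (a w)⁻¹ * fderiv ℝ a w (EuclideanSpace.single i 1) := by
  have hL : HasFDerivAt (fun w => Real.log (a w)) ((a w)⁻¹ • fderiv ℝ a w) w :=
    (hdiff_a a ha hpos w).hasFDerivAt.log (hpos w).ne'
  rw [pderiv3, hL.fderiv, ContinuousLinearMap.smul_apply, smul_eq_mul]

lemma hA_diff (i : Fin 3) :
    Differentiable ℝ (fun w => fderiv ℝ a w (EuclideanSpace.single i 1)) := by
  have h1 : ContDiff ℝ 1 (fderiv ℝ a) := ha.fderiv_right (by norm_num)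
  exact (ContinuousLinearMap.apply ℝ ℝ (EuclideanSpace.single i 1)).differentiable.comp
    (h1.differentiable one_ne_zero)

lemma hdL (i : Fin 3) : Differentiable ℝ (pderiv3 i (fun w => Real.log (a w))) := by
  have : pderiv3 i (fun w => Real.log (a w))
      = fun w => (a w)⁻¹ * fderiv ℝ a w (EuclideanSpace.single i 1) :=
    funext (pderiv_L a ha hpos i)
  rw [this]
  exact ((hdiff_a a ha hpos).inv (fun w => (hpos w).ne')).mul (hA_diff a ha hpos i)

lemma inner_eq (i : Fin 3) {z : E3} (hz : z ≠ y) :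
    a z * pderiv3 i (fun w => PΔ (w - y) / a w) z
      = pderiv3 i (fun w => PΔ (w - y)) z
        - pderiv3 i (fun w => Real.log (a w)) z * PΔ (z - y) := by
  have hu := hasFDerivAt_u y hz
  have hainv : HasFDerivAt (fun w => (a w)⁻¹) ((-(a z ^ 2)⁻¹) • fderiv ℝ a z) z := by
    have := (hasDerivAt_inv (hpos z).ne').comp_hasFDerivAt z (hdiff_a a ha hpos z).hasFDerivAt
    exact this
  have hP : HasFDerivAt (fun w => PΔ (w - y) / a w)
      ((PΔ (z - y)) • ((-(a z ^ 2)⁻¹) • fderiv ℝ a z)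
        + (a z)⁻¹ • ((cP * (-(1/2)) * q y z ^ (-(3/2) : ℝ)) • Dq y z)) z := by
    simp only [div_eq_mul_inv]
    exact hu.mul hainv
  rw [pderiv3, hP.fderiv, pderiv3, hu.fderiv, pderiv_L a ha hpos]
  simp only [ContinuousLinearMap.add_apply, ContinuousLinearMap.smul_apply, smul_eq_mul]
  have h0 := (hpos z).ne'
  field_simp
  ring

end aux4

/-- away from the diagonal, the parametrix `P(x,y) = P_Δ(x-y)/a(x)` for the
divergence-form operator `𝒜u = Σᵢ∂ᵢ(a∂ᵢu)` satisfies `𝒜ₓP(x,y) = R(x,y)`, where `R` is the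
remainder `R(x,y) = -Σᵢ ∂ᵢ(∂ᵢ(ln a)(x)·P_Δ(x-y))` expanded by the product rule. -/
theorem statement3 (a : E3 → ℝ) (ha : ContDiff ℝ 2 a) (hpos : ∀ x, 0 < a x) (y : E3) :
    ∀ x : E3, x ≠ y →
      ∑ i : Fin 3, pderiv3 i (fun z => a z * pderiv3 i (fun w => PΔ (w - y) / a w) z) x
      = -∑ i : Fin 3,
          (pderiv3 i (fun w => Real.log (a w)) x * pderiv3 i (fun w => PΔ (w - y)) x
            + pderiv3 i (pderiv3 i (fun w => Real.log (a w))) x * PΔ (x - y)) := by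
  intro x hx
  have key : ∀ i : Fin 3,
      pderiv3 i (fun z => a z * pderiv3 i (fun w => PΔ (w - y) / a w) z) x
        = pderiv3 i (pderiv3 i (fun z => PΔ (z - y))) x
          - (pderiv3 i (fun w => Real.log (a w)) x * pderiv3 i (fun w => PΔ (w - y)) x
             + pderiv3 i (pderiv3 i (fun w => Real.log (a w))) x * PΔ (x - y)) := by
    intro i
    have hEq : (fun z => a z * pderiv3 i (fun w => PΔ (w - y) / a w) z)
        =ᶠ[nhds x] (fun z => pderiv3 i (fun w => PΔ (w - y)) z
          - pderiv3 i (fun w => Real.log (a w)) z * PΔ (z - y)) := by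
      filter_upwards [IsOpen.mem_nhds isOpen_ne hx] with z hz
      exact inner_eq y a ha hpos i hz
    have d1 : DifferentiableAt ℝ (pderiv3 i (fun z => PΔ (z - y))) x :=
      (hasFDerivAt_g y i hx).differentiableAt.congr_of_eventuallyEq
        (eventually_pderiv_u y i hx)
    have d2 : DifferentiableAt ℝ (pderiv3 i (fun w => Real.log (a w))) x := hdL a ha hpos i x
    have d3 : DifferentiableAt ℝ (fun z => PΔ (z - y)) x := (hasFDerivAt_u y hx).differentiableAt
    have step : pderiv3 i (fun z => a z * pderiv3 i (fun w => PΔ (w - y) / a w) z) x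
        = pderiv3 i (fun z => pderiv3 i (fun w => PΔ (w - y)) z
            - pderiv3 i (fun w => Real.log (a w)) z * PΔ (z - y)) x := by
      rw [pderiv3, pderiv3, hEq.fderiv_eq]
    rw [step, pderiv3, fderiv_fun_sub d1 (d2.fun_mul d3), fderiv_fun_mul d2 d3]
    simp only [ContinuousLinearMap.sub_apply, ContinuousLinearMap.add_apply,
      ContinuousLinearMap.smul_apply, smul_eq_mul]
    simp only [pderiv3]
    ring
  rw [Finset.sum_congr rfl (fun i _ => key i), Finset.sum_sub_distrib, laplacian_u y hx]
  ring
end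
end

section
/- Let a : ℝ³ → ℝ be twice continuously differentiable and suppose there are positive constants C₁, M₁, M₂ with a(x) ≥ C₁, ‖∇a(x)‖ ≤ M₁ and |∂ᵢ∂ⱼa(x)| ≤ M₂ for all x ∈ ℝ³ and all i, j ∈ {1,2,3}. Define the remainder R(x,y) = −Σᵢ₌₁³ [ ∂ᵢ(ln a)(x) · ∂P_Δ/∂xᵢ(x−y) + ∂ᵢ∂ᵢ(ln a)(x) · P_Δ(x−y) ]. Then there exists a constant C > 0 (one may take C = (1/(4π))·(M₁/C₁ + 3·(M₂/C₁ + M₁²/C₁²))) such that |R(x,y)| ≤ C·|x−y|⁻² whenever 0 < |x−y| ≤ 1. That is, the remainder is weakly singular: R(x,y) = O(|x−y|⁻²). -/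
open MeasureTheory Real
open scoped ENNReal RealInnerProductSpace

noncomputable section

/-- The operator norm of `fderiv` equals the norm of the gradient. -/
lemma aux_fderiv_norm (a : E3 → ℝ) (x : E3) : ‖fderiv ℝ a x‖ = ‖gradient a x‖ := by
  rw [gradient]
  exact ((InnerProductSpace.toDual ℝ E3).symm.norm_map _).symm

lemma aux_fderiv_apply_bound {M₁ : ℝ} {a : E3 → ℝ} (hgrad : ∀ x, ‖gradient a x‖ ≤ M₁)
    (x : E3) (i : Fin 3) : |fderiv ℝ a x (EuclideanSpace.single i 1)| ≤ M₁ := by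
  have h1 : |fderiv ℝ a x (EuclideanSpace.single i 1)|
      ≤ ‖fderiv ℝ a x‖ * ‖(EuclideanSpace.single i (1:ℝ))‖ := by
    rw [← Real.norm_eq_abs]
    exact (fderiv ℝ a x).le_opNorm _
  simpa [EuclideanSpace.norm_single, aux_fderiv_norm] using h1.trans (by
    rw [EuclideanSpace.norm_single, norm_one, mul_one, aux_fderiv_norm]; exact hgrad x)

/-- First derivative of `log ∘ a`. -/
lemma aux_pdlog {C₁ : ℝ} (hC₁ : 0 < C₁) {a : E3 → ℝ} (ha : ContDiff ℝ 2 a)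
    (hlow : ∀ x, C₁ ≤ a x) (i : Fin 3) :
    pderiv3 i (fun w => Real.log (a w)) =
      fun w => (a w)⁻¹ * fderiv ℝ a w (EuclideanSpace.single i 1) := by
  funext w
  have hane : a w ≠ 0 := (hC₁.trans_le (hlow w)).ne'
  have hda : DifferentiableAt ℝ a w := (ha.differentiable two_ne_zero) w
  have := (hda.hasFDerivAt.log hane).fderiv
  simp [pderiv3, this]

lemma aux_pdlog_bound {C₁ M₁ : ℝ} (hC₁ : 0 < C₁) (hM₁ : 0 < M₁) {a : E3 → ℝ}
    (ha : ContDiff ℝ 2 a) (hlow : ∀ x, C₁ ≤ a x) (hgrad : ∀ x, ‖gradient a x‖ ≤ M₁)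
    (x : E3) (i : Fin 3) :
    |pderiv3 i (fun w => Real.log (a w)) x| ≤ M₁ / C₁ := by
  rw [aux_pdlog hC₁ ha hlow]
  have hax : 0 < a x := hC₁.trans_le (hlow x)
  rw [abs_mul, abs_of_pos (inv_pos.mpr hax)]
  calc (a x)⁻¹ * |fderiv ℝ a x (EuclideanSpace.single i 1)|
      ≤ C₁⁻¹ * M₁ := by
        apply mul_le_mul (by gcongr; exact hlow x) (aux_fderiv_apply_bound hgrad x i)
          (abs_nonneg _) (by positivity)
    _ = M₁ / C₁ := by rw [div_eq_mul_inv, mul_comm]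

/-- Second derivative of `log ∘ a` bound. -/
lemma aux_pdlog2_bound {C₁ M₁ M₂ : ℝ} (hC₁ : 0 < C₁) (hM₁ : 0 < M₁) (hM₂ : 0 < M₂)
    {a : E3 → ℝ} (ha : ContDiff ℝ 2 a) (hlow : ∀ x, C₁ ≤ a x)
    (hgrad : ∀ x, ‖gradient a x‖ ≤ M₁)
    (hhess : ∀ x, ∀ i j : Fin 3, |pderiv3 i (pderiv3 j a) x| ≤ M₂)
    (x : E3) (i : Fin 3) :
    |pderiv3 i (pderiv3 i (fun w => Real.log (a w))) x| ≤ M₂ / C₁ + M₁ ^ 2 / C₁ ^ 2 := by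
  have hax : 0 < a x := hC₁.trans_le (hlow x)
  have hane : a x ≠ 0 := hax.ne'
  have hda : Differentiable ℝ a := ha.differentiable two_ne_zero
  set e := EuclideanSpace.single i (1:ℝ) with he
  set v : E3 → ℝ := fun w => fderiv ℝ a w e with hv
  rw [aux_pdlog hC₁ ha hlow]
  -- differentiability of v
  have hfd1 : ContDiff ℝ 1 (fderiv ℝ a) := ha.fderiv_right (by norm_num)
  have hvc : ContDiff ℝ 1 v := hfd1.clm_apply contDiff_const
  have hvd : DifferentiableAt ℝ v x := (hvc.differentiable one_ne_zero) x
  -- derivative of (a ·)⁻¹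
  have hu : HasFDerivAt (fun w => (a w)⁻¹) ((-((a x) ^ 2)⁻¹) • fderiv ℝ a x) x :=
    (hasDerivAt_inv hane).comp_hasFDerivAt x (hda x).hasFDerivAt
  have hg : HasFDerivAt (fun w => (a w)⁻¹ * v w)
      ((a x)⁻¹ • fderiv ℝ v x + v x • ((-((a x) ^ 2)⁻¹) • fderiv ℝ a x)) x :=
    hu.mul hvd.hasFDerivAt
  have hval : pderiv3 i (fun w => (a w)⁻¹ * v w) x
      = (a x)⁻¹ * (fderiv ℝ v x e) + v x * (-((a x) ^ 2)⁻¹ * fderiv ℝ a x e) := by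
    rw [pderiv3, hg.fderiv]
    simp [mul_assoc]
    rfl
  have hvv : fderiv ℝ v x e = pderiv3 i (pderiv3 i a) x := rfl
  rw [hval]
  have h2 : |fderiv ℝ v x e| ≤ M₂ := by rw [hvv]; exact hhess x i i
  have h1 : |fderiv ℝ a x e| ≤ M₁ := aux_fderiv_apply_bound hgrad x i
  have h1' : |v x| ≤ M₁ := aux_fderiv_apply_bound hgrad x i
  calc |(a x)⁻¹ * (fderiv ℝ v x e) + v x * (-((a x) ^ 2)⁻¹ * fderiv ℝ a x e)|
      ≤ |(a x)⁻¹| * |fderiv ℝ v x e| + |v x| * (|(-((a x) ^ 2)⁻¹)| * |fderiv ℝ a x e|) := by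
        refine (abs_add_le _ _).trans ?_
        rw [abs_mul, abs_mul, abs_mul]
    _ ≤ C₁⁻¹ * M₂ + M₁ * ((C₁ ^ 2)⁻¹ * M₁) := by
        have hinv1 : |(a x)⁻¹| ≤ C₁⁻¹ := by
          rw [abs_of_pos (inv_pos.mpr hax)]; gcongr; exact hlow x
        have hinv2 : |(-((a x) ^ 2)⁻¹)| ≤ (C₁ ^ 2)⁻¹ := by
          rw [abs_neg, abs_of_pos (inv_pos.mpr (pow_pos hax 2))]
          gcongr; exact hlow x
        gcongr
    _ = M₂ / C₁ + M₁ ^ 2 / C₁ ^ 2 := by ring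

/-- Derivative bound of the translated fundamental solution. -/
lemma aux_pdP_bound (y x : E3) (hxy : x - y ≠ 0) (i : Fin 3) :
    |pderiv3 i (fun w => PΔ (w - y)) x| ≤ (4 * Real.pi)⁻¹ / ‖x - y‖ ^ 2 := by
  set r := ‖x - y‖ with hrdef
  have hr : 0 < r := norm_pos_iff.mpr hxy
  set e := EuclideanSpace.single i (1:ℝ) with he
  have hπ : (0:ℝ) < 4 * Real.pi := by positivity
  -- derivative of w ↦ ‖w - y‖
  have hsub : HasFDerivAt (fun w : E3 => w - y) (ContinuousLinearMap.id ℝ E3) x :=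
    (hasFDerivAt_id x).sub_const y
  have hsq : HasFDerivAt (fun w : E3 => ‖w - y‖ ^ 2)
      (2 • (innerSL ℝ (x - y)).comp (ContinuousLinearMap.id ℝ E3)) x := hsub.norm_sq
  set D : E3 →L[ℝ] ℝ := (1 / (2 * Real.sqrt (‖x - y‖ ^ 2))) •
      (2 • (innerSL ℝ (x - y)).comp (ContinuousLinearMap.id ℝ E3)) with hD
  have hsqrt : HasFDerivAt (fun w : E3 => Real.sqrt (‖w - y‖ ^ 2)) D x :=
    hsq.sqrt (by positivity)
  have hnorm : HasFDerivAt (fun w : E3 => ‖w - y‖) D x := by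
    have heq : (fun w : E3 => Real.sqrt (‖w - y‖ ^ 2)) = fun w : E3 => ‖w - y‖ := by
      funext w; exact Real.sqrt_sq (norm_nonneg _)
    rwa [heq] at hsqrt
  have hinv : HasFDerivAt (fun w : E3 => ‖w - y‖⁻¹) ((-(r ^ 2)⁻¹) • D) x :=
    (hasDerivAt_inv hr.ne').comp_hasFDerivAt x hnorm
  have hP : HasFDerivAt (fun w : E3 => PΔ (w - y))
      (-((4 * Real.pi)⁻¹ • ((-(r ^ 2)⁻¹) • D))) x := by
    have heq : (fun w : E3 => PΔ (w - y)) =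
        fun w : E3 => -((4 * Real.pi)⁻¹ * ‖w - y‖⁻¹) := by
      funext w; rw [PΔ, one_div, mul_inv]
    rw [heq]
    exact (hinv.const_mul _).neg
  set c : ℝ := inner ℝ (x - y) e with hc
  have hval : pderiv3 i (fun w => PΔ (w - y)) x = (4 * Real.pi)⁻¹ * c / r ^ 3 := by
    rw [pderiv3, hP.fderiv]
    simp only [ContinuousLinearMap.neg_apply, ContinuousLinearMap.smul_apply, hD,
      ContinuousLinearMap.comp_apply, ContinuousLinearMap.id_apply, innerSL_apply_apply,
      smul_eq_mul, Real.sqrt_sq (norm_nonneg (x - y)), ← hrdef, ← hc]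
    field_simp
    rw [Real.sqrt_sq hr.le, hc, he]
    simp only [nsmul_eq_mul, smul_eq_mul, Nat.cast_ofNat]
    ring
  rw [hval]
  have hce : |c| ≤ r := by
    rw [hc, hrdef]
    calc |(inner ℝ (x - y) e : ℝ)| ≤ ‖x - y‖ * ‖e‖ := abs_real_inner_le_norm _ _
      _ = ‖x - y‖ := by rw [he, EuclideanSpace.norm_single, norm_one, mul_one]
  calc |(4 * Real.pi)⁻¹ * c / r ^ 3|
      = (4 * Real.pi)⁻¹ * |c| / r ^ 3 := by
        rw [abs_div, abs_mul, abs_of_pos (inv_pos.mpr hπ), abs_of_pos (pow_pos hr 3)]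
    _ ≤ (4 * Real.pi)⁻¹ * r / r ^ 3 := by gcongr
    _ = (4 * Real.pi)⁻¹ / r ^ 2 := by
        field_simp

/-- the remainder `R(x,y)` is weakly singular, `R(x,y) = O(|x-y|⁻²)`;
one may take `C = (1/(4π))·(M₁/C₁ + 3·(M₂/C₁ + M₁²/C₁²))`. -/
theorem statement4 (C₁ M₁ M₂ : ℝ) (hC₁ : 0 < C₁) (hM₁ : 0 < M₁) (hM₂ : 0 < M₂)
    (a : E3 → ℝ) (ha : ContDiff ℝ 2 a)
    (hlow : ∀ x, C₁ ≤ a x)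
    (hgrad : ∀ x, ‖gradient a x‖ ≤ M₁)
    (hhess : ∀ x, ∀ i j : Fin 3, |pderiv3 i (pderiv3 j a) x| ≤ M₂)
    (R : E3 → E3 → ℝ)
    (hR : ∀ x y, R x y = -∑ i : Fin 3,
        (pderiv3 i (fun w => Real.log (a w)) x * pderiv3 i (fun w => PΔ (w - y)) x
          + pderiv3 i (pderiv3 i (fun w => Real.log (a w))) x * PΔ (x - y))) :
    ∃ C > 0, ∀ x y : E3, 0 < ‖x - y‖ → ‖x - y‖ ≤ 1 → |R x y| ≤ C / ‖x - y‖ ^ 2 := by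
  have hπ : (0:ℝ) < 4 * Real.pi := by positivity
  refine ⟨3 * ((M₁ / C₁ + (M₂ / C₁ + M₁ ^ 2 / C₁ ^ 2)) * (4 * Real.pi)⁻¹), by positivity, ?_⟩
  intro x y hr hr1
  set r := ‖x - y‖ with hrdef
  have hxy : x - y ≠ 0 := norm_pos_iff.mp hr
  have hPb : |PΔ (x - y)| ≤ (4 * Real.pi)⁻¹ / r ^ 2 := by
    rw [PΔ, abs_neg, abs_of_pos (by positivity : (0:ℝ) < 1 / (4 * Real.pi * r))]
    rw [one_div, mul_inv, div_eq_mul_inv]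
    have h2 : r⁻¹ ≤ (r ^ 2)⁻¹ := by
      apply inv_anti₀ (by positivity)
      nlinarith
    exact mul_le_mul_of_nonneg_left h2 (inv_nonneg.mpr hπ.le)
  have key : ∀ i : Fin 3,
      |pderiv3 i (fun w => Real.log (a w)) x * pderiv3 i (fun w => PΔ (w - y)) x
        + pderiv3 i (pderiv3 i (fun w => Real.log (a w))) x * PΔ (x - y)|
      ≤ (M₁ / C₁ + (M₂ / C₁ + M₁ ^ 2 / C₁ ^ 2)) * ((4 * Real.pi)⁻¹ / r ^ 2) := by
    intro i
    have b1 := aux_pdlog_bound hC₁ hM₁ ha hlow hgrad x i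
    have b2 := aux_pdP_bound y x hxy i
    have b3 := aux_pdlog2_bound hC₁ hM₁ hM₂ ha hlow hgrad hhess x i
    calc |pderiv3 i (fun w => Real.log (a w)) x * pderiv3 i (fun w => PΔ (w - y)) x
          + pderiv3 i (pderiv3 i (fun w => Real.log (a w))) x * PΔ (x - y)|
        ≤ |pderiv3 i (fun w => Real.log (a w)) x| * |pderiv3 i (fun w => PΔ (w - y)) x|
          + |pderiv3 i (pderiv3 i (fun w => Real.log (a w))) x| * |PΔ (x - y)| := by
          refine (abs_add_le _ _).trans ?_
          rw [abs_mul, abs_mul]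
      _ ≤ (M₁ / C₁) * ((4 * Real.pi)⁻¹ / r ^ 2)
          + (M₂ / C₁ + M₁ ^ 2 / C₁ ^ 2) * ((4 * Real.pi)⁻¹ / r ^ 2) := by
          refine add_le_add (mul_le_mul b1 b2 (abs_nonneg _) (by positivity))
            (mul_le_mul b3 hPb (abs_nonneg _) (by positivity))
      _ = (M₁ / C₁ + (M₂ / C₁ + M₁ ^ 2 / C₁ ^ 2)) * ((4 * Real.pi)⁻¹ / r ^ 2) := by ring
  rw [hR, abs_neg]
  calc |∑ i : Fin 3,
        (pderiv3 i (fun w => Real.log (a w)) x * pderiv3 i (fun w => PΔ (w - y)) x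
          + pderiv3 i (pderiv3 i (fun w => Real.log (a w))) x * PΔ (x - y))|
      ≤ ∑ i : Fin 3,
        |pderiv3 i (fun w => Real.log (a w)) x * pderiv3 i (fun w => PΔ (w - y)) x
          + pderiv3 i (pderiv3 i (fun w => Real.log (a w))) x * PΔ (x - y)| :=
        Finset.abs_sum_le_sum_abs _ _
    _ ≤ ∑ _i : Fin 3, (M₁ / C₁ + (M₂ / C₁ + M₁ ^ 2 / C₁ ^ 2)) * ((4 * Real.pi)⁻¹ / r ^ 2) :=
        Finset.sum_le_sum fun i _ => key i
    _ = 3 * ((M₁ / C₁ + (M₂ / C₁ + M₁ ^ 2 / C₁ ^ 2)) * (4 * Real.pi)⁻¹) / r ^ 2 := by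
        simp [Finset.sum_const]
        ring
end
end

section
/- Let a : ℝ³ → ℝ be twice continuously differentiable and suppose there are positive constants C₁, M₁, M₂ with a(x) ≥ C₁, ω(x)·‖∇a(x)‖ ≤ M₁ and ω(x)²·|Δa(x)| ≤ M₂ for all x ∈ ℝ³. Then for every continuously differentiable g : ℝ³ → ℝ, ‖ω·( ⟨∇g, ∇(ln a)⟩ + g·Δ(ln a) )‖_{L²} ≤ (M₁/C₁)·‖∇g‖_{L²} + ((C₁·M₂ + M₁²)/C₁²)·‖ω⁻¹·g‖_{L²}. In particular, the divergence ∇·(g ∇(ln a)) = ⟨∇g, ∇(ln a)⟩ + g·Δ(ln a) belongs to the weighted space L²(ω; ℝ³) whenever g lies in the weighted Sobolev space ℋ¹(ℝ³). -/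
open MeasureTheory Real
open scoped ENNReal RealInnerProductSpace

noncomputable section

lemma grad_apply (f : E3 → ℝ) (x v : E3) : ⟪gradient f x, v⟫ = fderiv ℝ f x v := by
  rw [gradient, InnerProductSpace.toDual_symm_apply]

lemma norm_grad_sq (f : E3 → ℝ) (x : E3) :
    ‖gradient f x‖ ^ 2 = ∑ i : Fin 3, (fderiv ℝ f x (EuclideanSpace.single i 1)) ^ 2 := by
  have h1 : ∀ i : Fin 3, fderiv ℝ f x (EuclideanSpace.single i 1) = gradient f x i := by
    intro i
    rw [← grad_apply, real_inner_comm, EuclideanSpace.inner_single_left]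
    simp
  simp_rw [h1]
  rw [EuclideanSpace.norm_eq, Real.sq_sqrt (by positivity)]
  simp [sq_abs]

lemma log_calc (a : E3 → ℝ) (ha : ContDiff ℝ 2 a) (hpos : ∀ x, 0 < a x) (x : E3) :
    fderiv ℝ (fun y => Real.log (a y)) x = (a x)⁻¹ • fderiv ℝ a x ∧
    laplacian3 (fun y => Real.log (a y)) x =
      (a x)⁻¹ * laplacian3 a x
        - ((a x) ^ 2)⁻¹ * ∑ i : Fin 3, (fderiv ℝ a x (EuclideanSpace.single i 1)) ^ 2 := by
  have hda : Differentiable ℝ a := ha.differentiable two_ne_zero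
  have hD : ContDiff ℝ 1 (fderiv ℝ a) := ha.fderiv_right (by norm_num)
  have hdD : Differentiable ℝ (fderiv ℝ a) := hD.differentiable one_ne_zero
  have hL : ∀ y, HasFDerivAt (fun z => Real.log (a z)) ((a y)⁻¹ • fderiv ℝ a y) y := fun y =>
    (Real.hasDerivAt_log (hpos y).ne').comp_hasFDerivAt y (hda y).hasFDerivAt
  refine ⟨(hL x).fderiv, ?_⟩
  have hp1 : ∀ i y, pderiv3 i (fun z => Real.log (a z)) y
      = (a y)⁻¹ * fderiv ℝ a y (EuclideanSpace.single i 1) := by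
    intro i y
    rw [pderiv3, (hL y).fderiv]
    simp
  have key : ∀ i : Fin 3, pderiv3 i (pderiv3 i (fun z => Real.log (a z))) x
      = (a x)⁻¹ * pderiv3 i (pderiv3 i a) x
        - ((a x) ^ 2)⁻¹ * (fderiv ℝ a x (EuclideanSpace.single i 1)) ^ 2 := by
    intro i
    set e := EuclideanSpace.single i (1:ℝ)
    have hinv : HasFDerivAt (fun y => (a y)⁻¹) ((-(a x ^ 2)⁻¹) • fderiv ℝ a x) x :=
      (hasDerivAt_inv (hpos x).ne').comp_hasFDerivAt x (hda x).hasFDerivAt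
    have happ : HasFDerivAt (fun y => fderiv ℝ a y e)
        (((fderiv ℝ a x).comp (0 : E3 →L[ℝ] E3) + (fderiv ℝ (fderiv ℝ a) x).flip e)) x :=
      (hdD x).hasFDerivAt.clm_apply (hasFDerivAt_const e x)
    have hmul : HasFDerivAt (fun y => (a y)⁻¹ * fderiv ℝ a y e) _ x := hinv.mul happ
    have h2a : pderiv3 i (pderiv3 i a) x = fderiv ℝ (fderiv ℝ a) x e e := by
      have : pderiv3 i a = fun y => fderiv ℝ a y e := rfl
      rw [pderiv3, this, happ.fderiv]
      simp; rfl
    have hfun : (fun y => (a y)⁻¹ * fderiv ℝ a y e) = pderiv3 i (fun z => Real.log (a z)) := by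
      funext y; rw [hp1 i y]
    rw [hfun] at hmul
    rw [pderiv3, hmul.fderiv, h2a]
    simp
    ring
  rw [laplacian3, laplacian3]
  simp_rw [key]
  rw [Finset.sum_sub_distrib, ← Finset.mul_sum, ← Finset.mul_sum]

lemma pointwise_bound (C₁ M₁ M₂ W A ip gx lap N G : ℝ)
    (hC : 0 < C₁) (hW : 1 ≤ W) (hA : C₁ ≤ A) (hip : |ip| ≤ G * N)
    (hN : 0 ≤ N) (hG : 0 ≤ G) (hWN : W * N ≤ M₁) (hWL : W ^ 2 * |lap| ≤ M₂) :
    |W * (A⁻¹ * ip + gx * (A⁻¹ * lap - (A ^ 2)⁻¹ * N ^ 2))|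
      ≤ M₁ / C₁ * G + (C₁ * M₂ + M₁ ^ 2) / C₁ ^ 2 * (W⁻¹ * |gx|) := by
  have hW0 : 0 < W := lt_of_lt_of_le one_pos hW
  have hA0 : 0 < A := lt_of_lt_of_le hC hA
  have hAinv : A⁻¹ ≤ C₁⁻¹ := by gcongr
  have hA2inv : (A ^ 2)⁻¹ ≤ (C₁ ^ 2)⁻¹ := by gcongr
  have hsub : |A⁻¹ * lap - (A ^ 2)⁻¹ * N ^ 2| ≤ A⁻¹ * |lap| + (A ^ 2)⁻¹ * N ^ 2 := by
    have h1 := abs_sub (A⁻¹ * lap) ((A ^ 2)⁻¹ * N ^ 2)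
    have h2 : |A⁻¹ * lap| = A⁻¹ * |lap| := by
      rw [abs_mul, abs_of_nonneg (by positivity : (0:ℝ) ≤ A⁻¹)]
    have h3 : |(A ^ 2)⁻¹ * N ^ 2| = (A ^ 2)⁻¹ * N ^ 2 := abs_of_nonneg (by positivity)
    linarith [h1, h2.le, h2.ge, h3.le, h3.ge]
  have htri : |W * (A⁻¹ * ip + gx * (A⁻¹ * lap - (A ^ 2)⁻¹ * N ^ 2))|
      ≤ W * (A⁻¹ * |ip|) + (W * |gx| * (A⁻¹ * |lap|) + W * |gx| * ((A ^ 2)⁻¹ * N ^ 2)) := by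
    have hstep : |A⁻¹ * ip + gx * (A⁻¹ * lap - (A ^ 2)⁻¹ * N ^ 2)|
        ≤ A⁻¹ * |ip| + |gx| * (A⁻¹ * |lap| + (A ^ 2)⁻¹ * N ^ 2) := by
      calc |A⁻¹ * ip + gx * (A⁻¹ * lap - (A ^ 2)⁻¹ * N ^ 2)|
          ≤ |A⁻¹ * ip| + |gx * (A⁻¹ * lap - (A ^ 2)⁻¹ * N ^ 2)| := abs_add_le _ _
        _ ≤ A⁻¹ * |ip| + |gx| * (A⁻¹ * |lap| + (A ^ 2)⁻¹ * N ^ 2) := by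
            rw [abs_mul, abs_mul, abs_of_nonneg (by positivity : (0:ℝ) ≤ A⁻¹)]
            gcongr
    have hstep2 := mul_le_mul_of_nonneg_left hstep hW0.le
    rw [abs_mul, abs_of_pos hW0]
    nlinarith [hstep2]
  have t1 : W * (A⁻¹ * |ip|) ≤ M₁ / C₁ * G := by
    calc W * (A⁻¹ * |ip|) ≤ W * (A⁻¹ * (G * N)) := by gcongr
      _ = A⁻¹ * (G * (W * N)) := by ring
      _ ≤ C₁⁻¹ * (G * M₁) := by gcongr
      _ = M₁ / C₁ * G := by rw [div_eq_mul_inv]; ring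
  have hWgx : W * |gx| = W ^ 2 * (W⁻¹ * |gx|) := by
    field_simp
  have t2 : W * |gx| * (A⁻¹ * |lap|) ≤ M₂ / C₁ * (W⁻¹ * |gx|) := by
    calc W * |gx| * (A⁻¹ * |lap|) = (W⁻¹ * |gx|) * (A⁻¹ * (W ^ 2 * |lap|)) := by
          rw [hWgx]; ring
      _ ≤ (W⁻¹ * |gx|) * (C₁⁻¹ * M₂) := by
          have hM2 : (0:ℝ) ≤ M₂ := le_trans (by positivity) hWL
          gcongr
      _ = M₂ / C₁ * (W⁻¹ * |gx|) := by rw [div_eq_mul_inv]; ring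
  have t3 : W * |gx| * ((A ^ 2)⁻¹ * N ^ 2) ≤ M₁ ^ 2 / C₁ ^ 2 * (W⁻¹ * |gx|) := by
    have hWN2 : (W * N) ^ 2 ≤ M₁ ^ 2 := by
      have : 0 ≤ W * N := by positivity
      nlinarith
    calc W * |gx| * ((A ^ 2)⁻¹ * N ^ 2) = (W⁻¹ * |gx|) * ((A ^ 2)⁻¹ * (W * N) ^ 2) := by
          rw [hWgx]; ring
      _ ≤ (W⁻¹ * |gx|) * ((C₁ ^ 2)⁻¹ * M₁ ^ 2) := by
          apply mul_le_mul_of_nonneg_left _ (by positivity)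
          exact mul_le_mul hA2inv hWN2 (by positivity) (by positivity)
      _ = M₁ ^ 2 / C₁ ^ 2 * (W⁻¹ * |gx|) := by rw [div_eq_mul_inv]; ring
  have hfin : M₂ / C₁ * (W⁻¹ * |gx|) + M₁ ^ 2 / C₁ ^ 2 * (W⁻¹ * |gx|)
      = (C₁ * M₂ + M₁ ^ 2) / C₁ ^ 2 * (W⁻¹ * |gx|) := by
    field_simp
  linarith [htri, t1, t2, t3]

/-- the divergence `∇·(g∇(ln a)) = ⟨∇g, ∇(ln a)⟩ + g·Δ(ln a)` lies in the weighted
space `L²(ω;ℝ³)` whenever `g ∈ ℋ¹(ℝ³)`, with the explicit estimate. -/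
theorem statement8 (C₁ M₁ M₂ : ℝ) (hC₁ : 0 < C₁) (hM₁ : 0 < M₁) (hM₂ : 0 < M₂)
    (a : E3 → ℝ) (ha : ContDiff ℝ 2 a)
    (hlow : ∀ x, C₁ ≤ a x)
    (hgrad : ∀ x, ω x * ‖gradient a x‖ ≤ M₁)
    (hlap : ∀ x, ω x ^ 2 * |laplacian3 a x| ≤ M₂)
    (g : E3 → ℝ) (hg : ContDiff ℝ 1 g) :
    eLpNorm (fun x => ω x * (⟪gradient g x, gradient (fun y => Real.log (a y)) x⟫
        + g x * laplacian3 (fun y => Real.log (a y)) x)) 2 volume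
    ≤ ENNReal.ofReal (M₁ / C₁) * eLpNorm (fun x => gradient g x) 2 volume
      + ENNReal.ofReal ((C₁ * M₂ + M₁ ^ 2) / C₁ ^ 2) *
          eLpNorm (fun x => (ω x)⁻¹ * g x) 2 volume := by
  have hpos : ∀ x, 0 < a x := fun x => lt_of_lt_of_le hC₁ (hlow x)
  have hω1 : ∀ x, 1 ≤ ω x := by
    intro x
    have h := Real.sqrt_le_sqrt (le_add_of_nonneg_right (sq_nonneg ‖x‖) : (1:ℝ) ≤ 1 + ‖x‖ ^ 2)
    rwa [Real.sqrt_one] at h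
  have hω0 : ∀ x, 0 < ω x := fun x => lt_of_lt_of_le one_pos (hω1 x)
  set c₁ := M₁ / C₁ with hc₁def
  set c₂ := (C₁ * M₂ + M₁ ^ 2) / C₁ ^ 2 with hc₂def
  have hc₁0 : 0 ≤ c₁ := by positivity
  have hc₂0 : 0 ≤ c₂ := by positivity
  set F₁ : E3 → ℝ := fun x => c₁ * ‖gradient g x‖ with hF₁def
  set F₂ : E3 → ℝ := fun x => c₂ * |(ω x)⁻¹ * g x| with hF₂def
  -- pointwise bound
  have hgradlog : ∀ x, gradient (fun y => Real.log (a y)) x = (a x)⁻¹ • gradient a x := by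
    intro x
    rw [gradient, (log_calc a ha hpos x).1, LinearIsometryEquiv.map_smul]
    rfl
  have hbound : ∀ x, ‖ω x * (⟪gradient g x, gradient (fun y => Real.log (a y)) x⟫
      + g x * laplacian3 (fun y => Real.log (a y)) x)‖ ≤ ‖(F₁ + F₂) x‖ := by
    intro x
    have hF12 : (F₁ + F₂) x = c₁ * ‖gradient g x‖ + c₂ * |(ω x)⁻¹ * g x| := rfl
    have hge : 0 ≤ (F₁ + F₂) x := by
      rw [hF12]
      exact add_nonneg (mul_nonneg hc₁0 (norm_nonneg _)) (mul_nonneg hc₂0 (abs_nonneg _))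
    rw [Real.norm_eq_abs, Real.norm_eq_abs, abs_of_nonneg hge, hF12]
    rw [hgradlog x, real_inner_smul_right, (log_calc a ha hpos x).2, ← norm_grad_sq]
    have habs : |(ω x)⁻¹ * g x| = (ω x)⁻¹ * |g x| := by
      rw [abs_mul, abs_of_nonneg (inv_nonneg.mpr (hω0 x).le)]
    rw [habs]
    exact pointwise_bound C₁ M₁ M₂ (ω x) (a x) ⟪gradient g x, gradient a x⟫ (g x)
      (laplacian3 a x) ‖gradient a x‖ ‖gradient g x‖ hC₁ (hω1 x) (hlow x)
      (abs_real_inner_le_norm _ _) (norm_nonneg _) (norm_nonneg _) (hgrad x) (hlap x)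
  -- measurability
  have hcontg' : Continuous (fun x => gradient g x) := by
    have h1 : Continuous (fderiv ℝ g) := hg.continuous_fderiv one_ne_zero
    exact (InnerProductSpace.toDual ℝ E3).symm.continuous.comp h1
  have hcontω : Continuous ω := by
    apply Real.continuous_sqrt.comp
    continuity
  have hF₁m : AEStronglyMeasurable F₁ volume :=
    (continuous_const.mul hcontg'.norm).aestronglyMeasurable
  have hF₂m : AEStronglyMeasurable F₂ volume := by
    refine (continuous_const.mul ?_).aestronglyMeasurable
    exact ((hcontω.inv₀ (fun x => (hω0 x).ne')).mul hg.continuous).abs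
  -- norm computations
  have hn1 : eLpNorm F₁ 2 volume = ENNReal.ofReal c₁ * eLpNorm (fun x => gradient g x) 2 volume := by
    have : F₁ = c₁ • (fun x => ‖gradient g x‖) := rfl
    rw [this, eLpNorm_const_smul, eLpNorm_norm, Real.enorm_eq_ofReal hc₁0]
  have hn2 : eLpNorm F₂ 2 volume = ENNReal.ofReal c₂ * eLpNorm (fun x => (ω x)⁻¹ * g x) 2 volume := by
    have h1 : F₂ = c₂ • (fun x => ‖(ω x)⁻¹ * g x‖) := by
      funext x; simp only [Pi.smul_apply, smul_eq_mul, Real.norm_eq_abs]; rfl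
    rw [h1, eLpNorm_const_smul, eLpNorm_norm, Real.enorm_eq_ofReal hc₂0]
  calc eLpNorm (fun x => ω x * (⟪gradient g x, gradient (fun y => Real.log (a y)) x⟫
        + g x * laplacian3 (fun y => Real.log (a y)) x)) 2 volume
      ≤ eLpNorm (F₁ + F₂) 2 volume := eLpNorm_mono hbound
    _ ≤ eLpNorm F₁ 2 volume + eLpNorm F₂ 2 volume := eLpNorm_add_le hF₁m hF₂m one_le_two
    _ = ENNReal.ofReal c₁ * eLpNorm (fun x => gradient g x) 2 volume
        + ENNReal.ofReal c₂ * eLpNorm (fun x => (ω x)⁻¹ * g x) 2 volume := by rw [hn1, hn2]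
end
end

section
/- For every continuously differentiable function u : ℝ³ → ℝ with compact support, ∫_{ℝ³} u(x)²/(1 + |x|²) dx ≤ 4 ∫_{ℝ³} ‖∇u(x)‖² dx. Consequently, on compactly supported C¹ functions the seminorm |u| = ‖∇u‖_{L²} is equivalent to the weighted norm ( ‖ω⁻¹·u‖_{L²}² + ‖∇u‖_{L²}² )^{1/2}: the latter is at most √5 times the former. -/
open MeasureTheory Real
open scoped ENNReal

noncomputable section

lemma q_pos_s12 (x : E3) : (0:ℝ) < 1 + ‖x‖ ^ 2 := by positivity

lemma norm_sq_eq_sum (x : E3) : ‖x‖ ^ 2 = ∑ i, x i ^ 2 := by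
  rw [EuclideanSpace.norm_eq, Real.sq_sqrt (by positivity)]
  simp [sq_abs]

lemma hasFDerivAt_q_s12 (x : E3) :
    HasFDerivAt (fun y : E3 => 1 + ‖y‖ ^ 2) ((2:ℝ) • (innerSL ℝ x)) x := by
  have h := (hasFDerivAt_id x).norm_sq
  have h2 := h.const_add 1
  refine h2.congr_fderiv ?_
  ext v
  simp [two_smul]

lemma hasFDerivAt_ginv (x : E3) :
    HasFDerivAt (fun y : E3 => (1 + ‖y‖ ^ 2)⁻¹)
      ((-(((1 + ‖x‖ ^ 2)) ^ 2)⁻¹) • ((2:ℝ) • (innerSL ℝ x))) x := by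
  have h1 := hasFDerivAt_q_s12 x
  have h2 : HasDerivAt (fun t : ℝ => t⁻¹) (-(((1 + ‖x‖ ^ 2)) ^ 2)⁻¹) (1 + ‖x‖ ^ 2) :=
    hasDerivAt_inv (q_pos_s12 x).ne'
  exact h2.comp_hasFDerivAt x h1

lemma hasFDerivAt_g_s12 (i : Fin 3) (x : E3) :
    HasFDerivAt (fun y : E3 => y i * (1 + ‖y‖ ^ 2)⁻¹)
      (x i • ((-(((1 + ‖x‖ ^ 2)) ^ 2)⁻¹) • ((2:ℝ) • (innerSL ℝ x)))
        + (1 + ‖x‖ ^ 2)⁻¹ • (EuclideanSpace.proj i : E3 →L[ℝ] ℝ)) x :=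
  ((EuclideanSpace.proj (𝕜 := ℝ) i).hasFDerivAt).mul (hasFDerivAt_ginv x)

lemma differentiable_g (i : Fin 3) :
    Differentiable ℝ (fun y : E3 => y i * (1 + ‖y‖ ^ 2)⁻¹) :=
  fun x => (hasFDerivAt_g_s12 i x).differentiableAt

lemma fderiv_g_apply (i : Fin 3) (x v : E3) :
    fderiv ℝ (fun y : E3 => y i * (1 + ‖y‖ ^ 2)⁻¹) x v
      = (1 + ‖x‖ ^ 2)⁻¹ * v i
        - 2 * (((1 + ‖x‖ ^ 2)) ^ 2)⁻¹ * (x i * (inner ℝ x v : ℝ)) := by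
  rw [(hasFDerivAt_g_s12 i x).fderiv]
  simp [ContinuousLinearMap.add_apply, ContinuousLinearMap.smul_apply, smul_eq_mul]
  ring

lemma fderiv_sq_apply {u : E3 → ℝ} (hu : Differentiable ℝ u) (x v : E3) :
    fderiv ℝ (fun y => u y ^ 2) x v = 2 * u x * fderiv ℝ u x v := by
  have h : HasFDerivAt (fun y => u y * u y)
      (u x • fderiv ℝ u x + u x • fderiv ℝ u x) x :=
    (hu x).hasFDerivAt.mul (hu x).hasFDerivAt
  have h2 : HasFDerivAt (fun y => u y ^ 2)
      (u x • fderiv ℝ u x + u x • fderiv ℝ u x) x := by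
    simpa [pow_two] using h
  rw [h2.fderiv]
  simp [ContinuousLinearMap.add_apply, smul_eq_mul]
  ring

lemma sum_coord_mul (L : E3 →L[ℝ] ℝ) (x : E3) :
    ∑ i : Fin 3, L (EuclideanSpace.single i 1) * x i = L x := by
  conv_rhs => rw [← (EuclideanSpace.basisFun (Fin 3) ℝ).sum_repr x]
  rw [map_sum]
  refine Finset.sum_congr rfl fun i _ => ?_
  rw [EuclideanSpace.basisFun_apply, EuclideanSpace.basisFun_repr, _root_.map_smul]
  simp [mul_comm]

lemma fderiv_g_self (i : Fin 3) (x : E3) :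
    fderiv ℝ (fun y : E3 => y i * (1 + ‖y‖ ^ 2)⁻¹) x (EuclideanSpace.single i 1)
      = (1 + ‖x‖ ^ 2)⁻¹ - 2 * (((1 + ‖x‖ ^ 2)) ^ 2)⁻¹ * x i ^ 2 := by
  have h1 : (EuclideanSpace.single i (1:ℝ)) i = 1 := by simp [EuclideanSpace.single_apply]
  have h2 : (inner ℝ x (EuclideanSpace.single i (1:ℝ)) : ℝ) = x i := by
    simp [EuclideanSpace.inner_single_right]
  rw [fderiv_g_apply, h1, h2]
  ring

lemma sum_div3 (x : E3) :
    ∑ i : Fin 3, ((1 + ‖x‖ ^ 2)⁻¹ - 2 * (((1 + ‖x‖ ^ 2)) ^ 2)⁻¹ * x i ^ 2)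
      = 3 * (1 + ‖x‖ ^ 2)⁻¹ - 2 * (((1 + ‖x‖ ^ 2)) ^ 2)⁻¹ * ‖x‖ ^ 2 := by
  rw [Finset.sum_sub_distrib, Finset.sum_const, ← Finset.mul_sum, ← norm_sq_eq_sum]
  simp

lemma support_subset_of_zero {α β γ : Type*} [Zero β] [Zero γ] {f : α → β} {g : α → γ}
    (h : ∀ x, f x = 0 → g x = 0) : Function.support g ⊆ Function.support f :=
  fun x hx hfx => hx (h x hfx)

lemma norm_gradient (u : E3 → ℝ) (x : E3) : ‖gradient u x‖ = ‖fderiv ℝ u x‖ :=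
  (InnerProductSpace.toDual ℝ E3).symm.norm_map _

lemma key_ineq {u : E3 → ℝ} (hu : ContDiff ℝ 1 u) (hsupp : HasCompactSupport u) :
    (∫ x : E3, u x ^ 2 * (1 + ‖x‖ ^ 2)⁻¹) ≤ 4 * ∫ x : E3, ‖fderiv ℝ u x‖ ^ 2 := by
  have hu' : Differentiable ℝ u := hu.differentiable one_ne_zero
  have huc : Continuous u := hu.continuous
  have hDc : Continuous fun x : E3 => fderiv ℝ u x := hu.continuous_fderiv one_ne_zero
  have hqc : Continuous fun x : E3 => (1 + ‖x‖ ^ 2)⁻¹ :=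
    (continuous_const.add (continuous_norm.pow 2)).inv₀ fun x => (q_pos_s12 x).ne'
  have hq2c : Continuous fun x : E3 => (((1 + ‖x‖ ^ 2)) ^ 2)⁻¹ :=
    ((continuous_const.add (continuous_norm.pow 2)).pow 2).inv₀ fun x => (pow_ne_zero 2 (q_pos_s12 x).ne')
  have hic : ∀ i : Fin 3, Continuous fun x : E3 => x i :=
    fun i => (EuclideanSpace.proj (𝕜 := ℝ) i).continuous
  -- integrability of the three families
  have I1 : ∀ i : Fin 3, Integrable (fun x : E3 => u x ^ 2 * (x i * (1 + ‖x‖ ^ 2)⁻¹)) := by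
    intro i
    refine Continuous.integrable_of_hasCompactSupport
      ((huc.pow 2).mul ((hic i).mul hqc)) (hsupp.mono (support_subset_of_zero ?_))
    intro x hx; simp [hx]
  have I2 : ∀ i : Fin 3, Integrable
      (fun x : E3 => u x ^ 2 * fderiv ℝ (fun y : E3 => y i * (1 + ‖y‖ ^ 2)⁻¹) x
        (EuclideanSpace.single i 1)) := by
    intro i
    have hrw : (fun x : E3 => u x ^ 2 * fderiv ℝ (fun y : E3 => y i * (1 + ‖y‖ ^ 2)⁻¹) x
          (EuclideanSpace.single i 1))
        = fun x : E3 => u x ^ 2 * ((1 + ‖x‖ ^ 2)⁻¹ - 2 * (((1 + ‖x‖ ^ 2)) ^ 2)⁻¹ * x i ^ 2) := by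
      funext x; rw [fderiv_g_self]
    rw [hrw]
    refine Continuous.integrable_of_hasCompactSupport
      ((huc.pow 2).mul (hqc.sub ((continuous_const.mul hq2c).mul ((hic i).pow 2))))
      (hsupp.mono (support_subset_of_zero ?_))
    intro x hx; simp [hx]
  have I3 : ∀ i : Fin 3, Integrable
      (fun x : E3 => fderiv ℝ (fun y => u y ^ 2) x (EuclideanSpace.single i 1)
        * (x i * (1 + ‖x‖ ^ 2)⁻¹)) := by
    intro i
    have hrw : (fun x : E3 => fderiv ℝ (fun y => u y ^ 2) x (EuclideanSpace.single i 1)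
          * (x i * (1 + ‖x‖ ^ 2)⁻¹))
        = fun x : E3 => (2 * u x * fderiv ℝ u x (EuclideanSpace.single i 1))
            * (x i * (1 + ‖x‖ ^ 2)⁻¹) := by
      funext x; rw [fderiv_sq_apply hu']
    rw [hrw]
    refine Continuous.integrable_of_hasCompactSupport
      (((continuous_const.mul huc).mul (hDc.clm_apply continuous_const)).mul ((hic i).mul hqc))
      (hsupp.mono (support_subset_of_zero ?_))
    intro x hx; simp [hx]
  -- integration by parts in each coordinate
  have ibp : ∀ i : Fin 3,
      ∫ x : E3, u x ^ 2 * fderiv ℝ (fun y : E3 => y i * (1 + ‖y‖ ^ 2)⁻¹) x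
          (EuclideanSpace.single i 1)
        = - ∫ x : E3, fderiv ℝ (fun y => u y ^ 2) x (EuclideanSpace.single i 1)
            * (x i * (1 + ‖x‖ ^ 2)⁻¹) := by
    intro i
    exact integral_mul_fderiv_eq_neg_fderiv_mul_of_integrable (I3 i) (I2 i) (I1 i)
      (fun x _ => (hu'.pow 2) x) (fun x _ => differentiable_g i x)
  -- the key identity
  have key : ∫ x : E3, u x ^ 2 * (3 * (1 + ‖x‖ ^ 2)⁻¹ - 2 * (((1 + ‖x‖ ^ 2)) ^ 2)⁻¹ * ‖x‖ ^ 2)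
      = - ∫ x : E3, 2 * u x * ((1 + ‖x‖ ^ 2)⁻¹ * fderiv ℝ u x x) := by
    calc
      ∫ x : E3, u x ^ 2 * (3 * (1 + ‖x‖ ^ 2)⁻¹ - 2 * (((1 + ‖x‖ ^ 2)) ^ 2)⁻¹ * ‖x‖ ^ 2)
          = ∑ i : Fin 3, ∫ x : E3, u x ^ 2 *
              fderiv ℝ (fun y : E3 => y i * (1 + ‖y‖ ^ 2)⁻¹) x (EuclideanSpace.single i 1) := by
            rw [← integral_finset_sum Finset.univ (fun i _ => I2 i)]
            congr 1; funext x
            simp only [fderiv_g_self]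
            rw [← Finset.mul_sum, sum_div3]
      _ = ∑ i : Fin 3, - ∫ x : E3, fderiv ℝ (fun y => u y ^ 2) x (EuclideanSpace.single i 1)
              * (x i * (1 + ‖x‖ ^ 2)⁻¹) := Finset.sum_congr rfl fun i _ => ibp i
      _ = - ∑ i : Fin 3, ∫ x : E3, fderiv ℝ (fun y => u y ^ 2) x (EuclideanSpace.single i 1)
              * (x i * (1 + ‖x‖ ^ 2)⁻¹) := by rw [Finset.sum_neg_distrib]
      _ = - ∫ x : E3, ∑ i : Fin 3, fderiv ℝ (fun y => u y ^ 2) x (EuclideanSpace.single i 1)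
              * (x i * (1 + ‖x‖ ^ 2)⁻¹) := by
            rw [integral_finset_sum Finset.univ (fun i _ => I3 i)]
      _ = - ∫ x : E3, 2 * u x * ((1 + ‖x‖ ^ 2)⁻¹ * fderiv ℝ u x x) := by
            have hfun : (fun x : E3 => ∑ i : Fin 3,
                fderiv ℝ (fun y => u y ^ 2) x (EuclideanSpace.single i 1)
                  * (x i * (1 + ‖x‖ ^ 2)⁻¹))
                = fun x : E3 => 2 * u x * ((1 + ‖x‖ ^ 2)⁻¹ * fderiv ℝ u x x) := by
              funext x
              have hterm : ∀ i : Fin 3, fderiv ℝ (fun y => u y ^ 2) x (EuclideanSpace.single i 1)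
                  * (x i * (1 + ‖x‖ ^ 2)⁻¹)
                  = (2 * u x * (1 + ‖x‖ ^ 2)⁻¹)
                      * (fderiv ℝ u x (EuclideanSpace.single i 1) * x i) := by
                intro i; rw [fderiv_sq_apply hu']; ring
              rw [Finset.sum_congr rfl fun i _ => hterm i, ← Finset.mul_sum]
              have hsum : ∑ i : Fin 3, fderiv ℝ u x (EuclideanSpace.single i 1) * x i
                  = fderiv ℝ u x x := sum_coord_mul (fderiv ℝ u x) x
              rw [hsum]
              ring
            rw [hfun]
  -- remaining integrability
  have IA : Integrable (fun x : E3 => u x ^ 2 * (1 + ‖x‖ ^ 2)⁻¹) := by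
    refine Continuous.integrable_of_hasCompactSupport ((huc.pow 2).mul hqc)
      (hsupp.mono (support_subset_of_zero ?_))
    intro x hx; simp [hx]
  have IP : Integrable (fun x : E3 =>
      u x ^ 2 * (3 * (1 + ‖x‖ ^ 2)⁻¹ - 2 * (((1 + ‖x‖ ^ 2)) ^ 2)⁻¹ * ‖x‖ ^ 2)) := by
    refine Continuous.integrable_of_hasCompactSupport
      ((huc.pow 2).mul ((continuous_const.mul hqc).sub
        ((continuous_const.mul hq2c).mul (continuous_norm.pow 2))))
      (hsupp.mono (support_subset_of_zero ?_))
    intro x hx; simp [hx]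
  have IB : Integrable (fun x : E3 => ‖fderiv ℝ u x‖ ^ 2) := by
    refine Continuous.integrable_of_hasCompactSupport (hDc.norm.pow 2)
      ((hsupp.fderiv ℝ).mono (support_subset_of_zero ?_))
    intro x hx; simp [hx]
  have IR : Integrable (fun x : E3 => 2 * u x * ((1 + ‖x‖ ^ 2)⁻¹ * fderiv ℝ u x x)) := by
    refine Continuous.integrable_of_hasCompactSupport
      ((continuous_const.mul huc).mul (hqc.mul (hDc.clm_apply continuous_id)))
      (hsupp.mono (support_subset_of_zero ?_))
    intro x hx; simp [hx]
  -- first comparison : A ≤ ∫ P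
  have hAP : (∫ x : E3, u x ^ 2 * (1 + ‖x‖ ^ 2)⁻¹)
      ≤ ∫ x : E3, u x ^ 2 * (3 * (1 + ‖x‖ ^ 2)⁻¹ - 2 * (((1 + ‖x‖ ^ 2)) ^ 2)⁻¹ * ‖x‖ ^ 2) := by
    refine integral_mono IA IP fun x => ?_
    have hq := q_pos_s12 x
    have h1 : (((1 + ‖x‖ ^ 2)) ^ 2)⁻¹ * (1 + ‖x‖ ^ 2) = (1 + ‖x‖ ^ 2)⁻¹ := by
      field_simp
    have h2 : 2 * (((1 + ‖x‖ ^ 2)) ^ 2)⁻¹ * ‖x‖ ^ 2 ≤ 2 * (1 + ‖x‖ ^ 2)⁻¹ := by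
      rw [← h1]
      have h3 : (0:ℝ) ≤ (((1 + ‖x‖ ^ 2)) ^ 2)⁻¹ := by positivity
      nlinarith [sq_nonneg ‖x‖]
    have h4 : (1 + ‖x‖ ^ 2)⁻¹
        ≤ 3 * (1 + ‖x‖ ^ 2)⁻¹ - 2 * (((1 + ‖x‖ ^ 2)) ^ 2)⁻¹ * ‖x‖ ^ 2 := by linarith
    exact mul_le_mul_of_nonneg_left h4 (sq_nonneg (u x))
  -- second comparison : -∫ R ≤ A/2 + 2B
  have hRB : - (∫ x : E3, 2 * u x * ((1 + ‖x‖ ^ 2)⁻¹ * fderiv ℝ u x x))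
      ≤ (1/2) * (∫ x : E3, u x ^ 2 * (1 + ‖x‖ ^ 2)⁻¹) + 2 * ∫ x : E3, ‖fderiv ℝ u x‖ ^ 2 := by
    have heq : - (∫ x : E3, 2 * u x * ((1 + ‖x‖ ^ 2)⁻¹ * fderiv ℝ u x x))
        = ∫ x : E3, - (2 * u x * ((1 + ‖x‖ ^ 2)⁻¹ * fderiv ℝ u x x)) := by
      rw [integral_neg]
    have hmono : ∫ x : E3, - (2 * u x * ((1 + ‖x‖ ^ 2)⁻¹ * fderiv ℝ u x x))
        ≤ ∫ x : E3, ((1/2) * (u x ^ 2 * (1 + ‖x‖ ^ 2)⁻¹) + 2 * ‖fderiv ℝ u x‖ ^ 2) := by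
      refine integral_mono IR.neg ((IA.const_mul _).add (IB.const_mul _)) fun x => ?_
      have hq := q_pos_s12 x
      have hD : |fderiv ℝ u x x| ≤ ‖fderiv ℝ u x‖ * ‖x‖ := by
        simpa using (fderiv ℝ u x).le_opNorm x
      have habs : - (2 * u x * ((1 + ‖x‖ ^ 2)⁻¹ * fderiv ℝ u x x))
          ≤ 2 * |u x| * ((1 + ‖x‖ ^ 2)⁻¹ * (‖fderiv ℝ u x‖ * ‖x‖)) := by
        have h0 : (0:ℝ) < (1 + ‖x‖ ^ 2)⁻¹ := by positivity
        calc - (2 * u x * ((1 + ‖x‖ ^ 2)⁻¹ * fderiv ℝ u x x))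
            ≤ |2 * u x * ((1 + ‖x‖ ^ 2)⁻¹ * fderiv ℝ u x x)| := neg_le_abs _
          _ = 2 * |u x| * ((1 + ‖x‖ ^ 2)⁻¹ * |fderiv ℝ u x x|) := by
              rw [abs_mul, abs_mul, abs_mul]
              simp [abs_of_pos h0, abs_of_nonneg, abs_two]
          _ ≤ 2 * |u x| * ((1 + ‖x‖ ^ 2)⁻¹ * (‖fderiv ℝ u x‖ * ‖x‖)) := by
              have := abs_nonneg (u x)
              gcongr
      have ht : ((1 + ‖x‖ ^ 2)⁻¹ * ‖x‖) ^ 2 ≤ (1 + ‖x‖ ^ 2)⁻¹ := by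
        have h5 : ((1 + ‖x‖ ^ 2)⁻¹) ^ 2 * (1 + ‖x‖ ^ 2) = (1 + ‖x‖ ^ 2)⁻¹ := by
          field_simp
        have h6 : ((1 + ‖x‖ ^ 2)⁻¹) ^ 2 * ‖x‖ ^ 2 ≤ ((1 + ‖x‖ ^ 2)⁻¹) ^ 2 * (1 + ‖x‖ ^ 2) := by
          have : (0:ℝ) ≤ ((1 + ‖x‖ ^ 2)⁻¹) ^ 2 := by positivity
          nlinarith [sq_nonneg ‖x‖]
        calc ((1 + ‖x‖ ^ 2)⁻¹ * ‖x‖) ^ 2 = ((1 + ‖x‖ ^ 2)⁻¹) ^ 2 * ‖x‖ ^ 2 := by ring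
          _ ≤ ((1 + ‖x‖ ^ 2)⁻¹) ^ 2 * (1 + ‖x‖ ^ 2) := h6
          _ = (1 + ‖x‖ ^ 2)⁻¹ := h5
      have hsq : u x ^ 2 = |u x| ^ 2 := (sq_abs _).symm
      nlinarith [sq_nonneg (|u x| * ((1 + ‖x‖ ^ 2)⁻¹ * ‖x‖) - 2 * ‖fderiv ℝ u x‖),
        sq_nonneg (u x), abs_nonneg (u x), norm_nonneg (fderiv ℝ u x),
        mul_le_mul_of_nonneg_left ht (sq_nonneg (u x))]
    have hsplit : ∫ x : E3, ((1/2) * (u x ^ 2 * (1 + ‖x‖ ^ 2)⁻¹) + 2 * ‖fderiv ℝ u x‖ ^ 2)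
        = (1/2) * (∫ x : E3, u x ^ 2 * (1 + ‖x‖ ^ 2)⁻¹) + 2 * ∫ x : E3, ‖fderiv ℝ u x‖ ^ 2 := by
      rw [integral_add (IA.const_mul _) (IB.const_mul _), integral_const_mul, integral_const_mul]
    rw [heq]
    calc _ ≤ _ := hmono
    _ = _ := hsplit
  linarith [hAP, key ▸ hAP, hRB]

/-- Hardy-type inequality: for compactly supported `C¹` functions,
`∫ u²/(1+|x|²) ≤ 4∫‖∇u‖²`; consequently the weighted `ℋ¹` norm is at most `√5` times the
seminorm `‖∇u‖_{L²}`. -/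
theorem statement12 (u : E3 → ℝ) (hu : ContDiff ℝ 1 u) (hsupp : HasCompactSupport u) :
    (∫ x : E3, u x ^ 2 / (1 + ‖x‖ ^ 2)) ≤ 4 * (∫ x : E3, ‖gradient u x‖ ^ 2) ∧
    Real.sqrt ((∫ x : E3, ((ω x)⁻¹ * u x) ^ 2) + ∫ x : E3, ‖gradient u x‖ ^ 2)
      ≤ Real.sqrt 5 * Real.sqrt (∫ x : E3, ‖gradient u x‖ ^ 2) := by
  have hA4B := key_ineq hu hsupp
  have hBrw : (∫ x : E3, ‖gradient u x‖ ^ 2) = ∫ x : E3, ‖fderiv ℝ u x‖ ^ 2 := by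
    simp only [norm_gradient]
  have hω : ∀ x : E3, ((ω x)⁻¹ * u x) ^ 2 = u x ^ 2 * (1 + ‖x‖ ^ 2)⁻¹ := by
    intro x
    have h : (ω x) ^ 2 = 1 + ‖x‖ ^ 2 := Real.sq_sqrt (by positivity)
    rw [mul_pow, inv_pow, h]
    ring
  have hA0 : (0:ℝ) ≤ ∫ x : E3, u x ^ 2 * (1 + ‖x‖ ^ 2)⁻¹ :=
    integral_nonneg fun x => by positivity
  have hB0 : (0:ℝ) ≤ ∫ x : E3, ‖fderiv ℝ u x‖ ^ 2 :=
    integral_nonneg fun x => by positivity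
  constructor
  · rw [hBrw]
    simpa only [div_eq_mul_inv] using hA4B
  · rw [hBrw]
    simp only [hω]
    calc Real.sqrt ((∫ x : E3, u x ^ 2 * (1 + ‖x‖ ^ 2)⁻¹) + ∫ x : E3, ‖fderiv ℝ u x‖ ^ 2)
        ≤ Real.sqrt (5 * ∫ x : E3, ‖fderiv ℝ u x‖ ^ 2) := Real.sqrt_le_sqrt (by linarith)
      _ = Real.sqrt 5 * Real.sqrt (∫ x : E3, ‖fderiv ℝ u x‖ ^ 2) :=
        Real.sqrt_mul (by norm_num) _
end
end
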